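/- ω₁ ≤ r ≤ tr ≤ c: the tree number (least size of a maximal subtree of ([ω]^ω, ⊆*)) is uncountable, at least the reaping number, and at most the continuum; in particular a maximal subtree of ([ω]^ω, ⊆*) of size continuum exists. -/

import Mathlib

/-- `A ⊆* B`: almost inclusion, `A \ B` is finite. -/
def AlmostSubset (A B : Set ℕ) : Prop := (A \ B).Finite

/-- `A` and `B` are `⊆*`-incomparable. -/
def StarIncomp (A B : Set ℕ) : Prop := ¬ AlmostSubset A B ∧ ¬ AlmostSubset B A

/-- The predecessors of `t` in `T` with respect to `⊆*` (including `t` itself). -/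
def StarPred (T : Set (Set ℕ)) (t : Set ℕ) : Set (Set ℕ) := {s ∈ T | AlmostSubset t s}

/-- `T` is a subtree of `([ω]^ω, ⊆*)`: all members are infinite, the largest element
`ω` belongs to `T`, distinct members of `T` are not almost equal (so `⊆*` is a genuine
partial order on `T`), and the predecessors of each node are well-ordered by reverse
`⊆*` (every nonempty subset of a predecessor set has a `⊆*`-greatest element). -/
def IsStarTree (T : Set (Set ℕ)) : Prop :=
  (∀ A ∈ T, A.Infinite) ∧ Set.univ ∈ T ∧
    (∀ s ∈ T, ∀ t ∈ T, AlmostSubset s t → AlmostSubset t s → s = t) ∧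
    ∀ t ∈ T, ∀ S ⊆ StarPred T t, S.Nonempty → ∃ m ∈ S, ∀ s ∈ S, AlmostSubset s m

/-- `T` end-extends `S` (as subtrees of `([ω]^ω, ⊆*)`). -/
def StarEndExt (S T : Set (Set ℕ)) : Prop :=
  S ⊆ T ∧ ∀ s ∈ S, StarPred T s = StarPred S s

/-- `T` is a maximal subtree of `([ω]^ω, ⊆*)`: for every infinite `C ⊆ ω` either some
`B ∈ T` satisfies `B ⊆* C`, or there are `⊆*`-incomparable `B, B' ∈ T` with
`C ⊆* B` and `C ⊆* B'`. -/
def IsMaxStarTree (T : Set (Set ℕ)) : Prop :=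
  IsStarTree T ∧ ∀ C : Set ℕ, C.Infinite →
    (∃ B ∈ T, AlmostSubset B C) ∨
      ∃ B ∈ T, ∃ B' ∈ T, StarIncomp B B' ∧ AlmostSubset C B ∧ AlmostSubset C B'

/-- `s` and `t` lie on the same level of `T`: their predecessor sets (which are
well-orders under `⊆*`) are order isomorphic, i.e. have the same order type. -/
def SameLevel (T : Set (Set ℕ)) (s t : Set ℕ) : Prop :=
  Nonempty ((fun a b : StarPred T s => AlmostSubset a.1 b.1) ≃r
    (fun a b : StarPred T t => AlmostSubset a.1 b.1))

/-- `T` has countable levels. -/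
def CountableLevels (T : Set (Set ℕ)) : Prop :=
  ∀ t ∈ T, {s ∈ T | SameLevel T s t}.Countable

/-- A reaping family. -/
def IsReaping (𝒜 : Set (Set ℕ)) : Prop :=
  (∀ A ∈ 𝒜, A.Infinite) ∧
    ∀ B : Set ℕ, B.Infinite → ∃ A ∈ 𝒜, (A ∩ B).Finite ∨ AlmostSubset A B

/-- The reaping number `𝔯`. -/
noncomputable def reapingNumber : Cardinal :=
  sInf {c | ∃ 𝒜 : Set (Set ℕ), IsReaping 𝒜 ∧ Cardinal.mk ↥𝒜 = c}

/-- The tree number `𝔱𝔯`. -/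
noncomputable def treeNumber : Cardinal :=
  sInf {c | ∃ T : Set (Set ℕ), IsMaxStarTree T ∧ Cardinal.mk ↥T = c}

theorem AlmostSubset.rfl {s : Set ℕ} : AlmostSubset s s := by
  simp [AlmostSubset]

theorem almostSubset_univ (s : Set ℕ) : AlmostSubset s Set.univ := by
  simp [AlmostSubset]

theorem AlmostSubset.trans {a b c : Set ℕ} (h1 : AlmostSubset a b) (h2 : AlmostSubset b c) :
    AlmostSubset a c := by
  have : a \ c ⊆ (a \ b) ∪ (b \ c) := by
    intro x hx
    by_cases hb : x ∈ b
    · exact Or.inr ⟨hb, hx.2⟩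
    · exact Or.inl ⟨hx.1, hb⟩
  exact (h1.union h2).subset this

theorem AlmostSubset.mono {a b c : Set ℕ} (h : a ⊆ b) (h2 : AlmostSubset b c) :
    AlmostSubset a c := h2.subset (Set.diff_subset_diff_left h)

/-- Two points of an infinite set above a bound. -/
theorem exists_two_gt {A : Set ℕ} (hA : A.Infinite) (n : ℕ) :
    ∃ x y, x ∈ A ∧ y ∈ A ∧ n < x ∧ x < y := by
  have h1 : (A \ Set.Iic n).Infinite := hA.diff (Set.finite_Iic n)
  obtain ⟨x, hx⟩ := h1.nonempty
  have h2 : (A \ Set.Iic x).Infinite := hA.diff (Set.finite_Iic x)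
  obtain ⟨y, hy⟩ := h2.nonempty
  exact ⟨x, y, hx.1, hy.1, by simpa using hx.2, by simpa using hy.2⟩

/-- Diagonal splitting: a countable family of infinite sets is simultaneously split. -/
theorem exists_splitter (f : ℕ → Set ℕ) (hf : ∀ n, (f n).Infinite) :
    ∃ B : Set ℕ, B.Infinite ∧ ∀ n, (f n ∩ B).Infinite ∧ (f n \ B).Infinite := by
  have key : ∀ i N : ℕ, ∃ p : ℕ × ℕ, p.1 ∈ f i ∧ p.2 ∈ f i ∧ N < p.1 ∧ p.1 < p.2 := by
    intro i N
    obtain ⟨x, y, hx, hy, h1, h2⟩ := exists_two_gt (hf i) N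
    exact ⟨(x, y), hx, hy, h1, h2⟩
  choose g hg1 hg2 hg3 hg4 using key
  set F : ℕ → ℕ × ℕ := fun k => Nat.rec (g (Nat.unpair 0).1 0)
    (fun k p => g (Nat.unpair (k+1)).1 p.2) k with hF
  set xs : ℕ → ℕ := fun k => (F k).1 with hxs
  set ys : ℕ → ℕ := fun k => (F k).2 with hys
  have hFsucc : ∀ k, F (k+1) = g (Nat.unpair (k+1)).1 (ys k) := fun k => rfl
  have hmemx : ∀ k, xs k ∈ f (Nat.unpair k).1 := by
    intro k; cases k with
    | zero => exact hg1 _ _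
    | succ k => exact hg1 _ _
  have hmemy : ∀ k, ys k ∈ f (Nat.unpair k).1 := by
    intro k; cases k with
    | zero => exact hg2 _ _
    | succ k => exact hg2 _ _
  have hxy : ∀ k, xs k < ys k := by
    intro k; cases k with
    | zero => exact hg4 _ _
    | succ k => exact hg4 _ _
  have hyx : ∀ k, ys k < xs (k+1) := by
    intro k; exact hg3 _ _
  have hmono : StrictMono xs := strictMono_nat_of_lt_succ (fun k => (hxy k).trans (hyx k))
  have hmonoy : StrictMono ys := by
    refine strictMono_nat_of_lt_succ (fun k => ((hyx k).trans (hxy (k+1))))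
  have hynotin : ∀ k j, xs j ≠ ys k := by
    intro k j h
    rcases le_or_gt j k with hj | hj
    · exact absurd h (ne_of_lt (lt_of_le_of_lt (hmono.monotone hj) (hxy k)))
    · exact absurd h (ne_of_gt (lt_of_lt_of_le (hyx k) (hmono.monotone hj)))
  refine ⟨Set.range xs, Set.infinite_range_of_injective hmono.injective, fun i => ?_⟩
  have hset : {k : ℕ | (Nat.unpair k).1 = i}.Infinite := by
    apply Set.infinite_of_injective_forall_mem (f := fun m => Nat.pair i m)
    · intro a b h; exact (Nat.pair_eq_pair.mp h).2
    · intro m; simp [Set.mem_setOf_eq]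
  constructor
  · have : xs '' {k : ℕ | (Nat.unpair k).1 = i} ⊆ f i ∩ Set.range xs := by
      rintro _ ⟨k, hk, rfl⟩
      exact ⟨hk ▸ hmemx k, Set.mem_range_self k⟩
    exact ((hset.image (hmono.injective.injOn)).mono this)
  · have : ys '' {k : ℕ | (Nat.unpair k).1 = i} ⊆ f i \ Set.range xs := by
      rintro _ ⟨k, hk, rfl⟩
      refine ⟨hk ▸ hmemy k, ?_⟩
      rintro ⟨j, hj⟩
      exact hynotin k j hj
    exact ((hset.image (hmonoy.injective.injOn)).mono this)

/-- The branch set: codes of initial segments of `x`. -/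
noncomputable def branchSet (x : ℕ → Bool) : Set ℕ :=
  Set.range (fun n => Encodable.encode ((List.range n).map x))

theorem branchSet_injective_fun (x : ℕ → Bool) :
    Function.Injective (fun n => Encodable.encode ((List.range n).map x)) := by
  intro a b h
  have := Encodable.encode_injective h
  have := congrArg List.length this
  simpa using this

theorem branchSet_infinite (x : ℕ → Bool) : (branchSet x).Infinite :=
  Set.infinite_range_of_injective (branchSet_injective_fun x)

theorem branchSet_almost_disjoint {x y : ℕ → Bool} (hxy : x ≠ y) :
    (branchSet x ∩ branchSet y).Finite := by
  obtain ⟨d, hd⟩ : ∃ d, x d ≠ y d := by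
    by_contra h; push_neg at h; exact hxy (funext h)
  have hsub : branchSet x ∩ branchSet y ⊆
      (fun n => Encodable.encode ((List.range n).map x)) '' (Set.Iic d) := by
    rintro z ⟨⟨n, rfl⟩, ⟨m, hm⟩⟩
    have hlist : (List.range m).map y = (List.range n).map x := Encodable.encode_injective hm
    have hlen : m = n := by simpa using congrArg List.length hlist
    subst hlen
    refine ⟨m, ?_, rfl⟩
    simp only [Set.mem_Iic]
    by_contra hgt
    push_neg at hgt
    have : y d = x d := by
      have h1 := congrArg (fun (l : List Bool) => l[d]?) hlist
      simp only [List.getElem?_map] at h1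
      rw [List.getElem?_range (by omega)] at h1
      simpa using h1
    exact hd this.symm
  exact ((Set.finite_Iic d).image _).subset hsub

theorem branchSet_diff_infinite {x y : ℕ → Bool} (hxy : x ≠ y) :
    (branchSet x \ branchSet y).Infinite := by
  have := (branchSet_infinite x).diff (branchSet_almost_disjoint hxy)
  apply this.mono
  intro z hz
  exact ⟨hz.1, fun h => hz.2 ⟨hz.1, h⟩⟩

theorem branchSet_not_almostSubset {x y : ℕ → Bool} (hxy : x ≠ y) :
    ¬ AlmostSubset (branchSet x) (branchSet y) :=
  fun h => (branchSet_diff_infinite hxy) h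

theorem branchSet_injective : Function.Injective branchSet := by
  intro x y h
  by_contra hxy
  exact branchSet_not_almostSubset hxy (by rw [h]; simp [AlmostSubset])

theorem branchSet_coinfinite (x : ℕ → Bool) : (Set.univ \ branchSet x).Infinite := by
  have hxy : (fun n => ! x n) ≠ x := by
    intro h
    have := congrFun h 0
    simp at this
  have := branchSet_diff_infinite hxy
  apply this.mono
  intro z hz
  exact ⟨trivial, hz.2⟩

theorem branchSet_ne_univ (x : ℕ → Bool) : branchSet x ≠ Set.univ := by
  intro h
  have := branchSet_coinfinite x
  rw [h] at this
  simp at this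

/-- The seed tree: `univ` together with a continuum-sized almost disjoint family. -/
noncomputable def seedTree : Set (Set ℕ) := insert Set.univ (Set.range branchSet)

theorem seedTree_isStarTree : IsStarTree seedTree := by
  have hnotuniv : ∀ x : ℕ → Bool, ¬ AlmostSubset Set.univ (branchSet x) := by
    intro x h
    exact branchSet_coinfinite x h
  have hbb : ∀ x y : ℕ → Bool, AlmostSubset (branchSet x) (branchSet y) → x = y := by
    intro x y h
    by_contra hxy
    exact branchSet_not_almostSubset hxy h
  refine ⟨?_, Or.inl rfl, ?_, ?_⟩
  · rintro A (rfl | ⟨x, rfl⟩)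
    · exact Set.infinite_univ
    · exact branchSet_infinite x
  · rintro s (rfl | ⟨x, rfl⟩) t (rfl | ⟨y, rfl⟩) h1 h2
    · rfl
    · exact absurd h1 (hnotuniv y)
    · exact absurd h2 (hnotuniv x)
    · rw [hbb x y h1]
  · rintro t (rfl | ⟨x, rfl⟩) S hS hSne
    · -- StarPred seedTree univ = {univ}
      have : ∀ s ∈ S, s = Set.univ := by
        intro s hs
        rcases hS hs with ⟨hmem, hsub⟩
        rcases hmem with rfl | ⟨y, rfl⟩
        · rfl
        · exact absurd hsub (hnotuniv y)
      obtain ⟨s, hs⟩ := hSne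
      exact ⟨s, hs, fun u hu => by rw [this s hs, this u hu]; simp [AlmostSubset]⟩
    · -- StarPred seedTree (branchSet x) = {univ, branchSet x}
      by_cases huniv : Set.univ ∈ S
      · exact ⟨Set.univ, huniv, fun s _ => by simp [AlmostSubset]⟩
      · have : ∀ s ∈ S, s = branchSet x := by
          intro s hs
          rcases hS hs with ⟨hmem, hsub⟩
          rcases hmem with rfl | ⟨y, rfl⟩
          · exact absurd hs huniv
          · rw [hbb x y hsub]
        obtain ⟨s, hs⟩ := hSne
        exact ⟨s, hs, fun u hu => by rw [this s hs, this u hu]; simp [AlmostSubset]⟩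

theorem seedTree_mk : Cardinal.mk ↥seedTree = Cardinal.continuum := by
  apply le_antisymm
  · calc Cardinal.mk ↥seedTree ≤ Cardinal.mk (Set ℕ) := Cardinal.mk_set_le _
    _ = Cardinal.continuum := by
        rw [Cardinal.mk_set, Cardinal.mk_nat, Cardinal.two_power_aleph0]
  · have h1 : Cardinal.continuum = Cardinal.mk (ℕ → Bool) := by
      rw [Cardinal.mk_arrow]
      simp [Cardinal.two_power_aleph0]
    have h2 : Cardinal.mk (ℕ → Bool) = Cardinal.mk ↥(Set.range branchSet) :=
      (Cardinal.mk_range_eq _ branchSet_injective).symm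
    have h3 : Cardinal.mk ↥(Set.range branchSet) ≤ Cardinal.mk ↥seedTree :=
      Cardinal.mk_le_mk_of_subset (Set.subset_insert _ _)
    rw [h1, h2]
    exact h3

theorem starEndExt_refl (T : Set (Set ℕ)) : StarEndExt T T := ⟨le_refl _, fun _ _ => rfl⟩

theorem starEndExt_trans {S T U : Set (Set ℕ)} (h1 : StarEndExt S T) (h2 : StarEndExt T U) :
    StarEndExt S U :=
  ⟨h1.1.trans h2.1, fun s hs => ((h2.2 s (h1.1 hs)).trans (h1.2 s hs))⟩







/-- Union of a chain of end-extending star trees. -/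
theorem chain_union_tree (T₀ : Set (Set ℕ))
    (c : Set {T : Set (Set ℕ) // IsStarTree T ∧ StarEndExt T₀ T})
    (hc : IsChain (fun a b => StarEndExt a.1 b.1) c) (hne : c.Nonempty) :
    ∃ U : Set (Set ℕ), IsStarTree U ∧ StarEndExt T₀ U ∧ ∀ a ∈ c, StarEndExt a.1 U := by
  classical
  set U : Set (Set ℕ) := {A | ∃ a ∈ c, A ∈ a.1} with hU
  -- stabilization of predecessor sets
  have hstab : ∀ a ∈ c, ∀ t ∈ a.1, StarPred U t = StarPred a.1 t := by
    rintro a hac t hta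
    ext s
    constructor
    · rintro ⟨⟨b, hbc, hsb⟩, hts⟩
      rcases eq_or_ne a b with rfl | hab
      · exact ⟨hsb, hts⟩
      · rcases hc hac hbc hab with hab' | hba'
        · -- a end-extended by b
          have : s ∈ StarPred b.1 t := ⟨hsb, hts⟩
          rw [hab'.2 t hta] at this
          exact this
        · exact ⟨hba'.1 hsb, hts⟩
    · rintro ⟨hsa, hts⟩
      exact ⟨⟨a, hac, hsa⟩, hts⟩
  obtain ⟨a₀, ha₀⟩ := hne
  have hsubU : ∀ a ∈ c, a.1 ⊆ U := fun a hac A hA => ⟨a, hac, hA⟩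
  have hUtree : IsStarTree U := by
    refine ⟨?_, ?_, ?_, ?_⟩
    · rintro A ⟨a, hac, hA⟩; exact a.2.1.1 A hA
    · exact ⟨a₀, ha₀, a₀.2.1.2.1⟩
    · rintro s ⟨a, hac, hsa⟩ t ⟨b, hbc, htb⟩ h1 h2
      rcases eq_or_ne a b with rfl | hab
      · exact a.2.1.2.2.1 s hsa t htb h1 h2
      · rcases hc hac hbc hab with hab' | hba'
        · exact b.2.1.2.2.1 s (hab'.1 hsa) t htb h1 h2
        · exact a.2.1.2.2.1 s hsa t (hba'.1 htb) h1 h2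
    · rintro t ⟨a, hac, hta⟩ S hS hSne
      rw [hstab a hac t hta] at hS
      exact a.2.1.2.2.2 t hta S hS hSne
  have hext : ∀ a ∈ c, StarEndExt a.1 U :=
    fun a hac => ⟨hsubU a hac, fun s hs => hstab a hac s hs⟩
  exact ⟨U, hUtree, starEndExt_trans a₀.2.2 (hext a₀ ha₀), hext⟩

/-- There is a maximal star tree end-extending any given star tree. -/
theorem exists_max_star_tree (T₀ : Set (Set ℕ)) (hT₀ : IsStarTree T₀) :
    ∃ M : Set (Set ℕ), IsMaxStarTree M ∧ T₀ ⊆ M := by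
  classical
  obtain ⟨M, hM⟩ := exists_maximal_of_chains_bounded
    (r := fun (a b : {T : Set (Set ℕ) // IsStarTree T ∧ StarEndExt T₀ T}) => StarEndExt a.1 b.1)
    (fun c hc => by
      rcases Set.eq_empty_or_nonempty c with rfl | hne
      · exact ⟨⟨T₀, hT₀, starEndExt_refl T₀⟩, fun a ha => absurd ha (Set.notMem_empty a)⟩
      · obtain ⟨U, h1, h2, h3⟩ := chain_union_tree T₀ c hc hne
        exact ⟨⟨U, h1, h2⟩, h3⟩)
    (fun h1 h2 => starEndExt_trans h1 h2)
  refine ⟨M.1, ⟨M.2.1, ?_⟩, M.2.2.1⟩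
  intro C hC
  by_contra hcon
  push_neg at hcon
  obtain ⟨h1, h2⟩ := hcon
  -- h1 : ∀ B ∈ M.1, ¬ AlmostSubset B C
  -- h2 : no incomparable pair above C
  have hlin : ∀ B ∈ M.1, ∀ B' ∈ M.1, AlmostSubset C B → AlmostSubset C B' →
      AlmostSubset B B' ∨ AlmostSubset B' B := by
    intro B hB B' hB' hCB hCB'
    by_contra hcontra
    push_neg at hcontra
    exact (h2 B hB B' hB' ⟨hcontra.1, hcontra.2⟩) hCB hCB'
  have hCnotin : C ∉ M.1 := fun h => h1 C h AlmostSubset.rfl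
  set M' : Set (Set ℕ) := insert C M.1 with hM'
  -- predecessor sets of old nodes don't change
  have hpredold : ∀ t ∈ M.1, StarPred M' t = StarPred M.1 t := by
    intro t ht
    ext s
    constructor
    · rintro ⟨hs, hts⟩
      rcases hs with rfl | hs
      · exact absurd hts (h1 t ht)
      · exact ⟨hs, hts⟩
    · rintro ⟨hs, hts⟩
      exact ⟨Or.inr hs, hts⟩
  have hM'tree : IsStarTree M' := by
    refine ⟨?_, Or.inr M.2.1.2.1, ?_, ?_⟩
    · rintro A (rfl | hA)
      · exact hC
      · exact M.2.1.1 A hA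
    · rintro s (rfl | hs) t (rfl | ht) hst hts
      · rfl
      · exact absurd hts (h1 t ht)
      · exact absurd hst (h1 s hs)
      · exact M.2.1.2.2.1 s hs t ht hst hts
    · rintro t (hteq | ht) S hS hSne
      · rw [hteq] at hS
        clear hteq
        by_cases hSC : ∃ B ∈ S, B ≠ C
        · obtain ⟨B₀, hB₀S, hB₀C⟩ := hSC
          have hB₀M : B₀ ∈ M.1 := by
            rcases (hS hB₀S).1 with rfl | h
            · exact absurd rfl hB₀C
            · exact h
          have hCB₀ : AlmostSubset C B₀ := (hS hB₀S).2
          set S₁ : Set (Set ℕ) := {s ∈ S | s ∈ M.1 ∧ AlmostSubset B₀ s} with hS₁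
          have hS₁sub : S₁ ⊆ StarPred M.1 B₀ := fun s hs => ⟨hs.2.1, hs.2.2⟩
          have hS₁ne : S₁.Nonempty := ⟨B₀, hB₀S, hB₀M, AlmostSubset.rfl⟩
          obtain ⟨m, hmS₁, hm⟩ := M.2.1.2.2.2 B₀ hB₀M S₁ hS₁sub hS₁ne
          refine ⟨m, hmS₁.1, ?_⟩
          intro s hsS
          rcases (hS hsS).1 with rfl | hsM
          · exact hCB₀.trans (hm B₀ ⟨hB₀S, hB₀M, AlmostSubset.rfl⟩)
          · have hCs : AlmostSubset C s := (hS hsS).2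
            rcases hlin s hsM B₀ hB₀M hCs hCB₀ with h | h
            · exact h.trans (hm B₀ ⟨hB₀S, hB₀M, AlmostSubset.rfl⟩)
            · exact hm s ⟨hsS, hsM, h⟩
        · push_neg at hSC
          obtain ⟨s, hs⟩ := hSne
          refine ⟨s, hs, fun u hu => ?_⟩
          rw [hSC s hs, hSC u hu]
          exact AlmostSubset.rfl
      · rw [hpredold t ht] at hS
        exact M.2.1.2.2.2 t ht S hS hSne
  have hM'ext : StarEndExt M.1 M' := ⟨Set.subset_insert _ _, hpredold⟩
  have := hM ⟨M', hM'tree, starEndExt_trans M.2.2 hM'ext⟩ hM'ext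
  exact hCnotin (this.1 (Set.mem_insert C M.1))


theorem exists_max_star_tree_continuum :
    ∃ M : Set (Set ℕ), IsMaxStarTree M ∧ Cardinal.mk ↥M = Cardinal.continuum := by
  obtain ⟨M, hM, hsub⟩ := exists_max_star_tree seedTree seedTree_isStarTree
  refine ⟨M, hM, le_antisymm ?_ ?_⟩
  · calc Cardinal.mk ↥M ≤ Cardinal.mk (Set ℕ) := Cardinal.mk_set_le _
    _ = Cardinal.continuum := by
        rw [Cardinal.mk_set, Cardinal.mk_nat, Cardinal.two_power_aleph0]
  · rw [← seedTree_mk]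
    exact Cardinal.mk_le_mk_of_subset hsub

/-- No countable family is reaping. -/
theorem aleph_one_le_of_isReaping {𝒜 : Set (Set ℕ)} (h : IsReaping 𝒜) :
    Cardinal.aleph 1 ≤ Cardinal.mk ↥𝒜 := by
  by_contra hlt
  push_neg at hlt
  have hcount : 𝒜.Countable := (Cardinal.countable_iff_lt_aleph_one 𝒜).mpr hlt
  have hne : 𝒜.Nonempty := by
    obtain ⟨A, hA, -⟩ := h.2 Set.univ Set.infinite_univ
    exact ⟨A, hA⟩
  obtain ⟨f, hf⟩ := hcount.exists_eq_range hne
  have hinf : ∀ n, (f n).Infinite := by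
    intro n
    exact h.1 (f n) (hf ▸ Set.mem_range_self n)
  obtain ⟨B, hB, hsplit⟩ := exists_splitter f hinf
  obtain ⟨A, hA, hAB⟩ := h.2 B hB
  rw [hf] at hA
  obtain ⟨n, rfl⟩ := hA
  rcases hAB with hfin | hsub
  · exact (hsplit n).1 hfin
  · exact (hsplit n).2 hsub

theorem aleph_one_le_reapingNumber : Cardinal.aleph 1 ≤ reapingNumber := by
  apply le_csInf
  · exact ⟨_, ⟨{A | A.Infinite}, ⟨fun A hA => hA,
      fun B hB => ⟨B, hB, Or.inr AlmostSubset.rfl⟩⟩, rfl⟩⟩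
  · rintro c ⟨𝒜, h𝒜, rfl⟩
    exact aleph_one_le_of_isReaping h𝒜

/-- A maximal star tree yields a reaping family of the same size. -/
theorem reapingNumber_le_mk_maxTree {T : Set (Set ℕ)} (hT : IsMaxStarTree T) :
    reapingNumber ≤ Cardinal.mk ↥T := by
  classical
  set S : Set (Set ℕ) := {D ∈ Set.image2 (· \ ·) T T | D.Infinite} with hS
  set 𝒜 : Set (Set ℕ) := T ∪ S with h𝒜
  have hreap : IsReaping 𝒜 := by
    constructor
    · rintro A (hA | hA)
      · exact hT.1.1 A hA
      · exact hA.2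
    · intro B hB
      rcases hT.2 B hB with ⟨A, hA, hAB⟩ | ⟨A, hA, A', hA', hinc, hBA, hBA'⟩
      · exact ⟨A, Or.inl hA, Or.inr hAB⟩
      · refine ⟨A \ A', Or.inr ⟨Set.mem_image2_of_mem hA hA', hinc.1⟩, Or.inl ?_⟩
        have hsub : (A \ A') ∩ B ⊆ B \ A' := fun x hx => ⟨hx.2, hx.1.2⟩
        exact hBA'.subset hsub
  have h1 : reapingNumber ≤ Cardinal.mk ↥𝒜 :=
    csInf_le (OrderBot.bddBelow _) ⟨𝒜, hreap, rfl⟩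
  have h2 : Cardinal.mk ↥𝒜 ≤ Cardinal.mk ↥T + Cardinal.mk ↥T * Cardinal.mk ↥T := by
    refine le_trans (Cardinal.mk_union_le T S) ?_
    gcongr
    refine le_trans (Cardinal.mk_le_mk_of_subset (Set.sep_subset _ _)) ?_
    exact Cardinal.mk_image2_le
  by_cases hbig : Cardinal.aleph0 ≤ Cardinal.mk ↥T
  · have : Cardinal.mk ↥T + Cardinal.mk ↥T * Cardinal.mk ↥T = Cardinal.mk ↥T := by
      rw [Cardinal.mul_eq_self hbig, Cardinal.add_eq_self hbig]
    exact h1.trans (h2.trans this.le)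
  · exfalso
    push_neg at hbig
    have hfin : Cardinal.mk ↥T + Cardinal.mk ↥T * Cardinal.mk ↥T < Cardinal.aleph0 :=
      Cardinal.add_lt_aleph0 hbig (Cardinal.mul_lt_aleph0 hbig hbig)
    have : reapingNumber < Cardinal.aleph 1 :=
      lt_of_le_of_lt (h1.trans h2) (hfin.trans Cardinal.aleph0_lt_aleph_one)
    exact absurd aleph_one_le_reapingNumber (not_le_of_gt this)


/-- `ω₁ ≤ 𝔯 ≤ 𝔱𝔯 ≤ 𝔠`; in particular a maximal subtree of `([ω]^ω, ⊆*)` of size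
continuum exists. -/
theorem omega1_le_r_le_tr_le_c :
    Cardinal.aleph 1 ≤ reapingNumber ∧
    reapingNumber ≤ treeNumber ∧
    treeNumber ≤ Cardinal.continuum ∧
    ∃ T : Set (Set ℕ), IsMaxStarTree T ∧ Cardinal.mk ↥T = Cardinal.continuum := by
  obtain ⟨M, hM, hMmk⟩ := exists_max_star_tree_continuum
  refine ⟨aleph_one_le_reapingNumber, ?_, ?_, ⟨M, hM, hMmk⟩⟩
  · apply le_csInf
    · exact ⟨_, M, hM, rfl⟩
    · rintro c ⟨T, hT, rfl⟩
      exact reapingNumber_le_mk_maxTree hT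
  · exact csInf_le (OrderBot.bddBelow _) ⟨M, hM, hMmk⟩
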